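/- For real numbers x, with interpolation slope λ = u/(u−l) where l < 0 < u and l ≤ x ≤ u, the interpolated ReLU approximation satisfies λx − λl/2 − (−λl/2) ≤ ReLU(x) ≤ λx − λl/2 + (−λl/2), i.e., λx ≤ ReLU(x) ≤ λx − λl. -/
import Mathlib

theorem relu_relaxation_sound (x l u lam : ℝ)
    (hl : l < 0) (hu : 0 < u) (hx : l ≤ x) (hxu : x ≤ u)
    (hlam : lam = u / (u - l)) :
    lam * x ≤ max 0 x ∧ max 0 x ≤ lam * x - lam * l := by
  have hd : 0 < u - l := by linarith
  have hlam0 : 0 < lam := by rw [hlam]; positivity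
  have hlam1 : lam ≤ 1 := by
    rw [hlam, div_le_one hd]; linarith
  constructor
  · rcases le_or_gt 0 x with h | h
    · rw [max_eq_right h]; nlinarith
    · rw [max_eq_left h.le]; nlinarith
  · rcases le_or_gt x 0 with h | h
    · rw [max_eq_left h]; nlinarith
    · rw [max_eq_right h.le]
      have : lam * (u - l) = u := by rw [hlam]; field_simp
      nlinarith
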